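/- For the special relativistic hydrodynamics entropy variables, the entropy potential satisfies φ := V^T U − η = ρW, where V = η'(U)^T, η = −ρWs/(Γ−1), s = ln(p/ρ^Γ), U = (D, m, E)^T with D = ρW, m = ρhW²v, E = ρhW² − p, h = 1 + Γp/((Γ−1)ρ), and W = 1/√(1−|v|²). -/

import Mathlib

/-- Entropy potential of special RHD: φ := V·U − η = ρW. -/
theorem rhd_entropy_potential (d : ℕ) (ρ p Γ : ℝ) (v : Fin d → ℝ)
    (hρ : 0 < ρ) (hp : 0 < p) (hv : ∑ i, v i ^ 2 < 1)
    (hΓ1 : 1 < Γ) (hΓ2 : Γ ≤ 2) :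
    let W : ℝ := 1 / Real.sqrt (1 - ∑ i, v i ^ 2)
    let h : ℝ := 1 + Γ * p / ((Γ - 1) * ρ)
    let s : ℝ := Real.log (p / ρ ^ Γ)
    let D : ℝ := ρ * W
    let m : Fin d → ℝ := fun i => ρ * h * W ^ 2 * v i
    let E : ℝ := ρ * h * W ^ 2 - p
    let η : ℝ := -(ρ * W * s) / (Γ - 1)
    ((Γ - s) / (Γ - 1) + ρ / p) * D + (∑ i, (ρ * W * v i / p) * m i)
      + (-(ρ * W) / p) * E - η = ρ * W := by
  intro W h s D m E η
  set q : ℝ := ∑ i, v i ^ 2 with hq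
  have h1 : 0 < 1 - q := by linarith
  have hr : Real.sqrt (1 - q) > 0 := Real.sqrt_pos.mpr h1
  have hr2 : Real.sqrt (1 - q) ^ 2 = 1 - q := Real.sq_sqrt h1.le
  have hsum : (∑ i, (ρ * W * v i / p) * m i)
      = (ρ * W * (ρ * h * W ^ 2) / p) * q := by
    simp only [m, hq, Finset.mul_sum]
    exact Finset.sum_congr rfl fun i _ => by ring
  rw [hsum]
  show ((Γ - s) / (Γ - 1) + ρ / p) * (ρ * W)
      + (ρ * W * (ρ * h * W ^ 2) / p) * q
      + (-(ρ * W) / p) * (ρ * h * W ^ 2 - p) - -(ρ * W * s) / (Γ - 1) = ρ * W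
  have hW : W = 1 / Real.sqrt (1 - q) := rfl
  have hh : h = 1 + Γ * p / ((Γ - 1) * ρ) := rfl
  rw [hW, hh]
  have hΓ : Γ - 1 ≠ 0 := by linarith
  field_simp
  rw [hr2]; ring
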